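/- Weak duality between the entropy-penalized Mather problem and Evans' minimization: inf_{μ ∈ 𝒞} A_{L,k}(μ) ≥ −(1/k) inf_{φ ∈ C¹(𝕋^{d+1})} log I_k[φ], where A_{L,k}(μ) = ∫ L dμ + (1/k) S[μ] and I_k[φ] = ∫ e^{k(φ_t + H(z,∇φ))}. -/

import Mathlib

open MeasureTheory Set

noncomputable section

def pd {n : ℕ} (i : Fin n) (f : (Fin n → ℝ) → ℝ) (z : Fin n → ℝ) : ℝ :=
  fderiv ℝ f z (Pi.single i 1)

def cube (n : ℕ) : Set (Fin n → ℝ) := Set.Icc 0 1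

/-- `ℤ^n`-periodicity -/
def Zper {n : ℕ} (f : (Fin n → ℝ) → ℝ) : Prop :=
  ∀ (z : Fin n → ℝ) (m : Fin n → ℤ), f (z + fun i => (m i : ℝ)) = f z

/-- time derivative `φ_t` (`t` is the last coordinate of `z ∈ 𝕋^{d+1}`) -/
def phit {d : ℕ} (φ : (Fin (d+1) → ℝ) → ℝ) (z : Fin (d+1) → ℝ) : ℝ :=
  pd (Fin.last d) φ z

/-- spatial gradient `∇φ` -/
def gradsp {d : ℕ} (φ : (Fin (d+1) → ℝ) → ℝ) (z : Fin (d+1) → ℝ) : Fin d → ℝ :=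
  fun i => pd i.castSucc φ z


lemma young (x y : ℝ) (hx : 0 ≤ x) : x * y ≤ x * Real.log x - x + Real.exp y := by
  rcases eq_or_lt_of_le hx with h | h
  · simp [← h]; positivity
  · have h1 : y - Real.log x + 1 ≤ Real.exp (y - Real.log x) := Real.add_one_le_exp _
    have h2 : Real.exp (y - Real.log x) = Real.exp y / x := by
      rw [Real.exp_sub, Real.exp_log h]
    rw [h2] at h1
    have := mul_le_mul_of_nonneg_left h1 hx
    have hx' : x ≠ 0 := ne_of_gt h
    field_simp at this
    nlinarith

section aux
variable {d n : ℕ} (L : (Fin n → ℝ) → (Fin d → ℝ) → ℝ)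

/-- pointwise bddAbove of the Legendre set -/
lemma bdd_f (hLc : ∀ z, Continuous (L z))
    (hLsuper : ∀ C : ℝ, ∃ R : ℝ, ∀ z v, R ≤ ‖v‖ → C * ‖v‖ ≤ L z v)
    (z : Fin n → ℝ) (q : Fin d → ℝ) :
    BddAbove (Set.range fun v => (∑ i, q i * v i) - L z v) := by
  obtain ⟨R, hR⟩ := hLsuper ((∑ i, |q i|) + 1)
  have hKc : IsCompact (Metric.closedBall (0 : Fin d → ℝ) (max R 0)) := isCompact_closedBall _ _
  have hKne : (Metric.closedBall (0 : Fin d → ℝ) (max R 0)).Nonempty :=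
    ⟨0, Metric.mem_closedBall_self (le_max_right _ _)⟩
  obtain ⟨v₀, _, hv₀⟩ := hKc.exists_isMaxOn hKne
    (Continuous.continuousOn (by continuity : Continuous fun v => (∑ i, q i * v i) - L z v))
  refine ⟨max ((∑ i, q i * v₀ i) - L z v₀) 0, ?_⟩
  rintro y ⟨v, rfl⟩
  by_cases hv : ‖v‖ ≤ max R 0
  · exact le_max_of_le_left (hv₀ (by simpa [Metric.mem_closedBall, dist_eq_norm] using hv))
  · push_neg at hv
    have h1 : (∑ i, q i * v i) ≤ (∑ i, |q i|) * ‖v‖ := by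
      calc (∑ i, q i * v i) ≤ ∑ i, |q i| * ‖v‖ := by
            refine Finset.sum_le_sum fun i _ => ?_
            have := norm_le_pi_norm v i
            calc q i * v i ≤ |q i * v i| := le_abs_self _
              _ = |q i| * |v i| := abs_mul _ _
              _ ≤ |q i| * ‖v‖ := by
                  exact mul_le_mul_of_nonneg_left (by simpa using this) (abs_nonneg _)
        _ = (∑ i, |q i|) * ‖v‖ := by rw [Finset.sum_mul]
    have h2 : ((∑ i, |q i|) + 1) * ‖v‖ ≤ L z v := hR z v (le_of_lt (lt_of_le_of_lt (le_max_left _ _) hv))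
    have hvn : 0 ≤ ‖v‖ := norm_nonneg _
    refine le_max_of_le_right ?_
    simp only [add_mul, one_mul] at h2
    show (∑ i, q i * v i) - L z v ≤ 0
    linarith

lemma fenchel (hLc : ∀ z, Continuous (L z))
    (hLsuper : ∀ C : ℝ, ∃ R : ℝ, ∀ z v, R ≤ ‖v‖ → C * ‖v‖ ≤ L z v)
    (H : (Fin n → ℝ) → (Fin d → ℝ) → ℝ)
    (hH : ∀ z p, H z p = sSup {y : ℝ | ∃ v : Fin d → ℝ, y = (∑ i, p i * v i) - L z v})
    (z : Fin n → ℝ) (q : Fin d → ℝ) (v : Fin d → ℝ) :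
    (∑ i, q i * v i) - L z v ≤ H z q := by
  rw [hH]
  have hset : {y : ℝ | ∃ v : Fin d → ℝ, y = (∑ i, q i * v i) - L z v}
      = Set.range fun v => (∑ i, q i * v i) - L z v := by
    ext y; simp [Set.range, eq_comm]
  rw [hset]
  exact le_csSup (bdd_f L hLc hLsuper z q) ⟨v, rfl⟩
end aux

section aux2
variable {n d : ℕ}

lemma Hcont (L : (Fin n → ℝ) → (Fin d → ℝ) → ℝ)
    (hLc : Continuous fun q : (Fin n → ℝ) × (Fin d → ℝ) => L q.1 q.2)
    (hLsuper : ∀ C : ℝ, ∃ R : ℝ, ∀ z v, R ≤ ‖v‖ → C * ‖v‖ ≤ L z v)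
    (H : (Fin n → ℝ) → (Fin d → ℝ) → ℝ)
    (hH : ∀ (z : Fin n → ℝ) (q : Fin d → ℝ), H z q = sSup (Set.range fun v : Fin d → ℝ => (∑ i, q i * v i) - L z v))
    (hbdd : ∀ (z : Fin n → ℝ) (q : Fin d → ℝ), BddAbove (Set.range fun v : Fin d → ℝ => (∑ i, q i * v i) - L z v))
    (p : (Fin n → ℝ) → Fin d → ℝ) (hp : Continuous p) :
    Continuous fun z => H z (p z) := by
  rw [continuous_iff_continuousAt]
  intro z₀
  set U := Metric.closedBall z₀ 1 with hUdef
  have hU : IsCompact U := isCompact_closedBall _ _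
  have hUne : U.Nonempty := ⟨z₀, Metric.mem_closedBall_self zero_le_one⟩
  have hqc : Continuous fun z => ∑ i, |p z i| := by
    apply continuous_finset_sum
    intro i _
    exact ((continuous_apply i).comp hp).abs
  obtain ⟨zB, _, hzB⟩ := hU.exists_isMaxOn hUne hqc.continuousOn
  set B : ℝ := ∑ i, |p zB i| with hBdef
  obtain ⟨R, hR⟩ := hLsuper (B + 1)
  have hL0c : Continuous fun z => L z 0 := hLc.comp (continuous_id.prodMk continuous_const)
  obtain ⟨zM, _, hzM⟩ := hU.exists_isMaxOn hUne hL0c.continuousOn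
  set R' : ℝ := max (max R (L zM 0)) 0 with hR'def
  set K := Metric.closedBall (0 : Fin d → ℝ) R' with hKdef
  have hK : IsCompact K := isCompact_closedBall _ _
  have h0K : (0 : Fin d → ℝ) ∈ K := Metric.mem_closedBall_self (le_max_right _ _)
  have hKne : K.Nonempty := ⟨0, h0K⟩
  set f : (Fin n → ℝ) → (Fin d → ℝ) → ℝ := fun z v => (∑ i, p z i * v i) - L z v with hfdef
  have hfc : Continuous fun q : (Fin n → ℝ) × (Fin d → ℝ) => f q.1 q.2 := by
    apply Continuous.sub
    · apply continuous_finset_sum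
      intro i _
      exact (((continuous_apply i).comp (hp.comp continuous_fst))).mul
        ((continuous_apply i).comp continuous_snd)
    · exact hLc
  -- pointwise bound
  have hsum : ∀ (z : Fin n → ℝ) (v : Fin d → ℝ), (∑ i, p z i * v i) ≤ (∑ i, |p z i|) * ‖v‖ := by
    intro z v
    calc (∑ i, p z i * v i) ≤ ∑ i, |p z i| * ‖v‖ := by
          refine Finset.sum_le_sum fun i _ => ?_
          have hvi : |v i| ≤ ‖v‖ := by simpa using norm_le_pi_norm v i
          calc p z i * v i ≤ |p z i * v i| := le_abs_self _
            _ = |p z i| * |v i| := abs_mul _ _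
            _ ≤ |p z i| * ‖v‖ := mul_le_mul_of_nonneg_left hvi (abs_nonneg _)
      _ = (∑ i, |p z i|) * ‖v‖ := by rw [Finset.sum_mul]
  have key1 : ∀ z ∈ U, ∀ v : Fin d → ℝ, R' < ‖v‖ → f z v ≤ f z 0 := by
    intro z hz v hv
    have h1 := hsum z v
    have h2 : (B + 1) * ‖v‖ ≤ L z v := by
      apply hR
      exact le_of_lt (lt_of_le_of_lt (le_trans (le_max_left R (L zM 0)) (le_max_left _ _)) hv)
    have h3 : (∑ i, |p z i|) ≤ B := hzB hz
    have h4 : L z 0 ≤ L zM 0 := hzM hz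
    have h5 : L zM 0 ≤ R' := le_trans (le_max_right R _) (le_max_left _ _)
    have hvn : 0 ≤ ‖v‖ := norm_nonneg _
    have h6 : f z v ≤ -‖v‖ := by
      show (∑ i, p z i * v i) - L z v ≤ -‖v‖
      nlinarith [mul_le_mul_of_nonneg_right h3 hvn]
    show f z v ≤ (∑ i, p z i * (0:Fin d → ℝ) i) - L z 0
    simp only [Pi.zero_apply, mul_zero, Finset.sum_const_zero, zero_sub]
    linarith
  have key2 : ∀ z ∈ U, H z (p z) = sSup (f z '' K) := by
    intro z hz
    have hbR : BddAbove (Set.range (f z)) := hbdd z (p z)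
    have hbI : BddAbove (f z '' K) := hbR.mono (Set.image_subset_range _ _)
    have hIne : (f z '' K).Nonempty := hKne.image _
    rw [hH]
    apply le_antisymm
    · refine csSup_le ⟨f z 0, ⟨0, rfl⟩⟩ ?_
      rintro y ⟨v, rfl⟩
      by_cases hv : ‖v‖ ≤ R'
      · exact le_csSup hbI ⟨v, by simpa [hKdef, Metric.mem_closedBall, dist_eq_norm] using hv, rfl⟩
      · push_neg at hv
        exact le_trans (key1 z hz v hv) (le_csSup hbI ⟨0, h0K, rfl⟩)
    · exact csSup_le_csSup hbR hIne (Set.image_subset_range _ _)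
  have hbI : ∀ w, BddAbove (f w '' K) :=
    fun w => (hbdd w (p w)).mono (Set.image_subset_range _ _)
  have hIne : ∀ w, (f w '' K).Nonempty := fun w => hKne.image _
  clear hfdef
  clear_value f
  have keyF : ContinuousAt (fun z => sSup (f z '' K)) z₀ := by
    rw [Metric.continuousAt_iff]
    intro ε hε
    have hUK : IsCompact (U ×ˢ K) := hU.prod hK
    have huc := hUK.uniformContinuousOn_of_continuous
      (hfc.continuousOn : ContinuousOn (fun q : _ × _ => f q.1 q.2) (U ×ˢ K))
    rw [Metric.uniformContinuousOn_iff] at huc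
    obtain ⟨δ, hδ, hclose⟩ := huc (ε/2) (half_pos hε)
    refine ⟨min δ 1, lt_min hδ one_pos, ?_⟩
    intro z hz
    have hzU : z ∈ U := by
      rw [hUdef, Metric.mem_closedBall]
      exact le_of_lt (lt_of_lt_of_le hz (min_le_right _ _))
    have hz₀U : z₀ ∈ U := Metric.mem_closedBall_self zero_le_one
    have hvclose : ∀ v ∈ K, |f z v - f z₀ v| ≤ ε/2 := by
      intro v hv
      have hd : dist ((z, v) : (Fin n → ℝ) × (Fin d → ℝ)) (z₀, v) < δ := by
        rw [Prod.dist_eq]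
        simp only [dist_self]
        exact max_lt (lt_of_lt_of_le hz (min_le_left _ _)) hδ
      have := hclose (z, v) (Set.mk_mem_prod hzU hv) (z₀, v) (Set.mk_mem_prod hz₀U hv) hd
      rw [Real.dist_eq] at this
      exact le_of_lt this
    have hle1 : sSup (f z '' K) ≤ sSup (f z₀ '' K) + ε/2 := by
      refine csSup_le (hIne z) ?_
      rintro y ⟨v, hv, rfl⟩
      have h1 := hvclose v hv
      have h2 : f z₀ v ≤ sSup (f z₀ '' K) := le_csSup (hbI z₀) ⟨v, hv, rfl⟩
      have h3 := (abs_le.mp h1).2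
      linarith
    have hle2 : sSup (f z₀ '' K) ≤ sSup (f z '' K) + ε/2 := by
      refine csSup_le (hIne z₀) ?_
      rintro y ⟨v, hv, rfl⟩
      have h1 := hvclose v hv
      have h2 : f z v ≤ sSup (f z '' K) := le_csSup (hbI z) ⟨v, hv, rfl⟩
      have h3 := (abs_le.mp h1).1
      linarith
    rw [Real.dist_eq, abs_sub_lt_iff]
    constructor <;> linarith [half_lt_self hε]
  apply keyF.congr
  filter_upwards [Metric.closedBall_mem_nhds z₀ one_pos] with z hz
  exact (key2 z hz).symm
end aux2


section main
theorem stmt_13' (d k : ℕ) (hk : 0 < k)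
    (L : (Fin (d+1) → ℝ) → (Fin d → ℝ) → ℝ)
    (hL : ContDiff ℝ 2 (fun q : (Fin (d+1) → ℝ) × (Fin d → ℝ) => L q.1 q.2))
    (hLsuper : ∀ C : ℝ, ∃ R : ℝ, ∀ z v, R ≤ ‖v‖ → C * ‖v‖ ≤ L z v)
    (H : (Fin (d+1) → ℝ) → (Fin d → ℝ) → ℝ)
    (hH : ∀ z p, H z p = sSup {y : ℝ | ∃ v : Fin d → ℝ, y = (∑ i, p i * v i) - L z v})
    (μ : Measure ((Fin (d+1) → ℝ) × (Fin d → ℝ)))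
    (hprob : IsProbabilityMeasure μ)
    (hsupp : μ ((Set.Icc 0 1 ×ˢ (Set.univ : Set (Fin d → ℝ)))ᶜ) = 0)
    (hmom : Integrable (fun zv : (Fin (d+1) → ℝ) × (Fin d → ℝ) => ‖zv.2‖) μ)
    (ρ : (Fin (d+1) → ℝ) → ℝ) (hρnn : ∀ z, 0 ≤ ρ z)
    (hmarg : ∀ g : (Fin (d+1) → ℝ) → ℝ, Continuous g →
      ∫ zv : (Fin (d+1) → ℝ) × (Fin d → ℝ), g zv.1 ∂μ =
        ∫ z in Set.Icc 0 1, g z * ρ z)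
    (hLint : Integrable (fun zv : (Fin (d+1) → ℝ) × (Fin d → ℝ) => L zv.1 zv.2) μ)
    (hent : IntegrableOn (fun z => ρ z * Real.log (ρ z)) (Set.Icc 0 1))
    (φ : (Fin (d+1) → ℝ) → ℝ) (hφ : ContDiff ℝ 1 φ)
    (p : (Fin (d+1) → ℝ) → (Fin d → ℝ)) (hp : Continuous p)
    (a : (Fin (d+1) → ℝ) → ℝ) (ha : Continuous a)
    (hholo : ∫ zv : (Fin (d+1) → ℝ) × (Fin d → ℝ),
        (a zv.1 + ∑ i, p zv.1 i * zv.2 i) ∂μ = 0) :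
    -((k : ℝ)⁻¹ * Real.log (∫ z in Set.Icc 0 1,
          Real.exp ((k : ℝ) * (a z + H z (p z))))) ≤
      (∫ zv : (Fin (d+1) → ℝ) × (Fin d → ℝ), L zv.1 zv.2 ∂μ)
        + (k : ℝ)⁻¹ * ∫ z in Set.Icc 0 1, ρ z * Real.log (ρ z) := by
  have hkr : (0:ℝ) < (k:ℝ) := by exact_mod_cast hk
  have hLcont : Continuous fun q : (Fin (d+1) → ℝ) × (Fin d → ℝ) => L q.1 q.2 := hL.continuous
  have hLc1 : ∀ z, Continuous (L z) :=
    fun z => hLcont.comp (continuous_const.prodMk continuous_id)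
  have hH' : ∀ (z : Fin (d+1) → ℝ) (q : Fin d → ℝ),
      H z q = sSup (Set.range fun v : Fin d → ℝ => (∑ i, q i * v i) - L z v) := by
    intro z q
    rw [hH]
    congr 1
    ext y
    simp [Set.range, eq_comm]
  have hbdd : ∀ (z : Fin (d+1) → ℝ) (q : Fin d → ℝ),
      BddAbove (Set.range fun v : Fin d → ℝ => (∑ i, q i * v i) - L z v) :=
    fun z q => bdd_f L hLc1 hLsuper z q
  have hHc : Continuous fun z => H z (p z) := Hcont L hLcont hLsuper H hH' hbdd p hp
  have hψc : Continuous fun z => a z + H z (p z) := ha.add hHc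
  have hfen : ∀ (z : Fin (d+1) → ℝ) (v : Fin d → ℝ),
      (∑ i, p z i * v i) - L z v ≤ H z (p z) :=
    fun z v => fenchel L hLc1 hLsuper H hH z (p z) v
  -- cube facts
  have hcubeC : IsCompact (Set.Icc (0 : Fin (d+1) → ℝ) 1) := isCompact_Icc
  have hcubeM : MeasurableSet (Set.Icc (0 : Fin (d+1) → ℝ) 1) := measurableSet_Icc
  have hcubeNe : (Set.Icc (0 : Fin (d+1) → ℝ) 1).Nonempty := ⟨0, le_refl 0, zero_le_one⟩
  have hvol : volume (Set.Icc (0 : Fin (d+1) → ℝ) 1) = 1 := by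
    rw [Real.volume_Icc_pi]
    simp
  -- ae membership
  have hae : ∀ᵐ zv ∂μ, zv.1 ∈ Set.Icc (0 : Fin (d+1) → ℝ) 1 := by
    have h1 : ∀ᵐ zv ∂μ, zv ∈ Set.Icc (0 : Fin (d+1) → ℝ) 1 ×ˢ (Set.univ : Set (Fin d → ℝ)) := by
      rw [MeasureTheory.ae_iff]
      exact hsupp
    filter_upwards [h1] with zv h using h.1
  -- bounds on cube
  obtain ⟨z₁, _, hz₁⟩ := hcubeC.exists_isMaxOn hcubeNe (hψc.abs.continuousOn)
  set Mψ : ℝ := |a z₁ + H z₁ (p z₁)| with hMψdef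
  obtain ⟨z₂, _, hz₂⟩ := hcubeC.exists_isMaxOn hcubeNe (ha.abs.continuousOn)
  set Ma : ℝ := |a z₂| with hMadef
  have hqc : Continuous fun z => ∑ i, |p z i| :=
    continuous_finset_sum _ fun i _ => ((continuous_apply i).comp hp).abs
  obtain ⟨z₃, _, hz₃⟩ := hcubeC.exists_isMaxOn hcubeNe hqc.continuousOn
  set B : ℝ := ∑ i, |p z₃ i| with hBdef
  -- abs of sum bound
  have habs : ∀ (z : Fin (d+1) → ℝ) (v : Fin d → ℝ),
      |∑ i, p z i * v i| ≤ (∑ i, |p z i|) * ‖v‖ := by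
    intro z v
    calc |∑ i, p z i * v i| ≤ ∑ i, |p z i * v i| := Finset.abs_sum_le_sum_abs _ _
      _ ≤ ∑ i, |p z i| * ‖v‖ := by
          refine Finset.sum_le_sum fun i _ => ?_
          rw [abs_mul]
          exact mul_le_mul_of_nonneg_left (by simpa using norm_le_pi_norm v i) (abs_nonneg _)
      _ = (∑ i, |p z i|) * ‖v‖ := by rw [Finset.sum_mul]
  -- μ-integrability
  have hint_psi : Integrable (fun zv : (Fin (d+1) → ℝ) × (Fin d → ℝ) => a zv.1 + H zv.1 (p zv.1)) μ := by
    refine Integrable.mono' (integrable_const Mψ)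
      ((hψc.comp continuous_fst).aestronglyMeasurable) ?_
    filter_upwards [hae] with zv h
    simpa [Real.norm_eq_abs] using hz₁ h
  have hint_a : Integrable (fun zv : (Fin (d+1) → ℝ) × (Fin d → ℝ) => a zv.1) μ := by
    refine Integrable.mono' (integrable_const Ma)
      ((ha.comp continuous_fst).aestronglyMeasurable) ?_
    filter_upwards [hae] with zv h
    simpa [Real.norm_eq_abs] using hz₂ h
  have hint_sum : Integrable (fun zv : (Fin (d+1) → ℝ) × (Fin d → ℝ) => ∑ i, p zv.1 i * zv.2 i) μ := by
    refine Integrable.mono' (hmom.const_mul B) ?_ ?_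
    · apply Continuous.aestronglyMeasurable
      exact continuous_finset_sum _ fun i _ =>
        (((continuous_apply i).comp (hp.comp continuous_fst))).mul
          ((continuous_apply i).comp continuous_snd)
    · filter_upwards [hae] with zv h
      rw [Real.norm_eq_abs]
      calc |∑ i, p zv.1 i * zv.2 i| ≤ (∑ i, |p zv.1 i|) * ‖zv.2‖ := habs _ _
        _ ≤ B * ‖zv.2‖ := mul_le_mul_of_nonneg_right (hz₃ h) (norm_nonneg _)
  have hint_b : Integrable (fun zv : (Fin (d+1) → ℝ) × (Fin d → ℝ) =>
      a zv.1 + ∑ i, p zv.1 i * zv.2 i) μ := hint_a.add hint_sum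
  -- step 1 : -(∫ L) ≤ ∫ ψ ∘ fst
  have step1 : -(∫ zv : (Fin (d+1) → ℝ) × (Fin d → ℝ), L zv.1 zv.2 ∂μ)
      ≤ ∫ zv : (Fin (d+1) → ℝ) × (Fin d → ℝ), (a zv.1 + H zv.1 (p zv.1)) ∂μ := by
    have h0 : 0 ≤ ∫ zv : (Fin (d+1) → ℝ) × (Fin d → ℝ),
        ((a zv.1 + H zv.1 (p zv.1)) - (a zv.1 + ∑ i, p zv.1 i * zv.2 i) + L zv.1 zv.2) ∂μ := by
      apply integral_nonneg
      intro zv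
      have := hfen zv.1 zv.2
      simp only [Pi.zero_apply]
      linarith
    have hint_diff : Integrable (fun zv : (Fin (d+1) → ℝ) × (Fin d → ℝ) =>
        (a zv.1 + H zv.1 (p zv.1)) - (a zv.1 + ∑ i, p zv.1 i * zv.2 i)) μ := hint_psi.sub hint_b
    rw [integral_add hint_diff hLint, integral_sub hint_psi hint_b, hholo] at h0
    linarith
  -- step 2 : marginal
  have step2 : ∫ zv : (Fin (d+1) → ℝ) × (Fin d → ℝ), (a zv.1 + H zv.1 (p zv.1)) ∂μ
      = ∫ z in Set.Icc 0 1, (a z + H z (p z)) * ρ z := hmarg _ hψc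
  -- ρ integrable, ∫ρ = 1
  have hρ1 : ∫ z in Set.Icc (0 : Fin (d+1) → ℝ) 1, ρ z = 1 := by
    have h := hmarg (fun _ => 1) continuous_const
    simp only [one_mul] at h
    rw [← h, integral_const]
    simp
  have hρint : IntegrableOn ρ (Set.Icc (0 : Fin (d+1) → ℝ) 1) := by
    by_contra hc
    rw [MeasureTheory.integral_undef hc] at hρ1
    exact one_ne_zero hρ1.symm
  -- exp integrand
  have hΨc : Continuous fun z => (k:ℝ) * (a z + H z (p z)) := continuous_const.mul hψc
  have hexpc : Continuous fun z => Real.exp ((k:ℝ) * (a z + H z (p z))) := Real.continuous_exp.comp hΨc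
  have hexpint : IntegrableOn (fun z => Real.exp ((k:ℝ) * (a z + H z (p z))))
      (Set.Icc (0 : Fin (d+1) → ℝ) 1) := hexpc.continuousOn.integrableOn_compact hcubeC
  set I : ℝ := ∫ z in Set.Icc (0 : Fin (d+1) → ℝ) 1, Real.exp ((k:ℝ) * (a z + H z (p z))) with hIdef
  have hIpos : 0 < I := by
    obtain ⟨z₄, _, hz₄⟩ := hcubeC.exists_isMinOn hcubeNe hΨc.continuousOn
    have h := setIntegral_ge_of_const_le_real (c := Real.exp ((k:ℝ) * (a z₄ + H z₄ (p z₄)))) hcubeM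
      (by rw [hvol]; exact ENNReal.one_ne_top)
      (fun z hz => Real.exp_le_exp.mpr (hz₄ hz)) hexpint
    rw [measureReal_def, hvol] at h
    simp only [ENNReal.toReal_one, one_smul, mul_one] at h
    exact lt_of_lt_of_le (Real.exp_pos _) h
  -- pointwise Young
  have hpw : ∀ z, ρ z * ((k:ℝ) * (a z + H z (p z)))
      ≤ ρ z * Real.log (ρ z) - ρ z + ρ z * Real.log I
        + Real.exp ((k:ℝ) * (a z + H z (p z))) / I := by
    intro z
    have h := young (ρ z) ((k:ℝ) * (a z + H z (p z)) - Real.log I) (hρnn z)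
    rw [Real.exp_sub, Real.exp_log hIpos] at h
    nlinarith [h]
  -- integrability on cube of all pieces
  have hρΨ : IntegrableOn (fun z => ρ z * ((k:ℝ) * (a z + H z (p z))))
      (Set.Icc (0 : Fin (d+1) → ℝ) 1) := by
    refine Integrable.mono' (hρint.mul_const ((k:ℝ) * Mψ))
      (hρint.aestronglyMeasurable.mul hΨc.aestronglyMeasurable.restrict) ?_
    rw [MeasureTheory.ae_restrict_iff' hcubeM]
    refine MeasureTheory.ae_of_all _ fun z hz => ?_
    rw [Real.norm_eq_abs, abs_mul, abs_of_nonneg (hρnn z), abs_mul, Nat.abs_cast]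
    rw [mul_comm (ρ z) ((k:ℝ) * Mψ)] -- goal : ρ z * (k * |ψ|) ≤ k * Mψ * ρ z ... adjust
    rw [mul_comm ((k:ℝ) * Mψ) (ρ z)]
    exact mul_le_mul_of_nonneg_left
      (mul_le_mul_of_nonneg_left (hz₁ hz) (le_of_lt hkr)) (hρnn z)
  have hρlogI : IntegrableOn (fun z => ρ z * Real.log I)
      (Set.Icc (0 : Fin (d+1) → ℝ) 1) := hρint.mul_const _
  have hexpdiv : IntegrableOn (fun z => Real.exp ((k:ℝ) * (a z + H z (p z))) / I)
      (Set.Icc (0 : Fin (d+1) → ℝ) 1) := hexpint.div_const _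
  have hrhsint : IntegrableOn (fun z => ρ z * Real.log (ρ z) - ρ z + ρ z * Real.log I
        + Real.exp ((k:ℝ) * (a z + H z (p z))) / I)
      (Set.Icc (0 : Fin (d+1) → ℝ) 1) := ((hent.sub hρint).add hρlogI).add hexpdiv
  -- integrate Young
  have hmono := integral_mono hρΨ hrhsint hpw
  have hi1 : IntegrableOn (fun z => ρ z * Real.log (ρ z) - ρ z)
      (Set.Icc (0 : Fin (d+1) → ℝ) 1) := hent.sub hρint
  have hi2 : IntegrableOn (fun z => ρ z * Real.log (ρ z) - ρ z + ρ z * Real.log I)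
      (Set.Icc (0 : Fin (d+1) → ℝ) 1) := hi1.add hρlogI
  rw [integral_add hi2 hexpdiv,
      integral_add hi1 hρlogI,
      integral_sub hent hρint, hρ1, integral_div, integral_mul_const, hρ1, one_mul,
      ← hIdef, div_self (ne_of_gt hIpos)] at hmono
  -- relate lhs of hmono to ∫ψρ
  have hswap : ∫ z in Set.Icc (0 : Fin (d+1) → ℝ) 1, ρ z * ((k:ℝ) * (a z + H z (p z)))
      = (k:ℝ) * ∫ z in Set.Icc (0 : Fin (d+1) → ℝ) 1, (a z + H z (p z)) * ρ z := by
    rw [← integral_const_mul]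
    congr 1
    ext z
    ring
  rw [hswap, ← step2] at hmono
  set E : ℝ := ∫ z in Set.Icc (0 : Fin (d+1) → ℝ) 1, ρ z * Real.log (ρ z) with hEdef
  set IL : ℝ := ∫ zv : (Fin (d+1) → ℝ) × (Fin d → ℝ), L zv.1 zv.2 ∂μ with hILdef
  have hfinal : -Real.log I ≤ (k:ℝ) * IL + E := by
    have h1 : (k:ℝ) * (-IL) ≤ (k:ℝ) * ∫ zv : (Fin (d+1) → ℝ) × (Fin d → ℝ),
        (a zv.1 + H zv.1 (p zv.1)) ∂μ := mul_le_mul_of_nonneg_left step1 (le_of_lt hkr)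
    nlinarith [h1, hmono]
  have h2 := mul_le_mul_of_nonneg_left hfinal (le_of_lt (inv_pos.mpr hkr))
  rw [mul_add, ← mul_assoc, inv_mul_cancel₀ (ne_of_gt hkr), one_mul] at h2
  linarith
end main


/-- Weak duality between the entropy-penalized Mather problem and Evans'
minimization: for every holonomic probability measure `μ` on `𝕋^{d+1} × ℝ^d`
with finite first moment, marginal density `ρ` on `𝕋^{d+1}`, and every
`φ ∈ C¹(𝕋^{d+1})`,
`∫ L dμ + (1/k)∫ ρ log ρ ≥ -(1/k) log I_k[φ]`;
hence `inf_μ A_{L,k}(μ) ≥ -(1/k) inf_φ log I_k[φ]`. -/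
theorem stmt_13 (d k : ℕ) (hk : 0 < k)
    (L : (Fin (d+1) → ℝ) → (Fin d → ℝ) → ℝ)
    (hL : ContDiff ℝ 2 (fun q : (Fin (d+1) → ℝ) × (Fin d → ℝ) => L q.1 q.2))
    (hLper : ∀ z p (m : Fin (d+1) → ℤ), L (z + fun i => (m i : ℝ)) p = L z p)
    (hLconv : ∀ z, StrictConvexOn ℝ Set.univ (L z))
    (hLsuper : ∀ C : ℝ, ∃ R : ℝ, ∀ z v, R ≤ ‖v‖ → C * ‖v‖ ≤ L z v)
    (H : (Fin (d+1) → ℝ) → (Fin d → ℝ) → ℝ)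
    (hH : ∀ z p, H z p = sSup {y : ℝ | ∃ v : Fin d → ℝ, y = (∑ i, p i * v i) - L z v})
    (μ : Measure ((Fin (d+1) → ℝ) × (Fin d → ℝ)))
    (hprob : IsProbabilityMeasure μ)
    (hsupp : μ ((cube (d+1) ×ˢ (Set.univ : Set (Fin d → ℝ)))ᶜ) = 0)
    (hmom : Integrable (fun zv : (Fin (d+1) → ℝ) × (Fin d → ℝ) => ‖zv.2‖) μ)
    (hholo : ∀ φ : (Fin (d+1) → ℝ) → ℝ, ContDiff ℝ 1 φ → Zper φ →
      ∫ zv : (Fin (d+1) → ℝ) × (Fin d → ℝ),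
        (phit φ zv.1 + ∑ i, gradsp φ zv.1 i * zv.2 i) ∂μ = 0)
    (ρ : (Fin (d+1) → ℝ) → ℝ) (hρnn : ∀ z, 0 ≤ ρ z)
    (hmarg : ∀ g : (Fin (d+1) → ℝ) → ℝ, Continuous g →
      ∫ zv : (Fin (d+1) → ℝ) × (Fin d → ℝ), g zv.1 ∂μ =
        ∫ z in cube (d+1), g z * ρ z)
    (hLint : Integrable (fun zv : (Fin (d+1) → ℝ) × (Fin d → ℝ) => L zv.1 zv.2) μ)
    (hent : IntegrableOn (fun z => ρ z * Real.log (ρ z)) (cube (d+1))) :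
    ∀ φ : (Fin (d+1) → ℝ) → ℝ, ContDiff ℝ 1 φ → Zper φ →
      -((k : ℝ)⁻¹ * Real.log (∫ z in cube (d+1),
          Real.exp ((k : ℝ) * (phit φ z + H z (gradsp φ z))))) ≤
      (∫ zv : (Fin (d+1) → ℝ) × (Fin d → ℝ), L zv.1 zv.2 ∂μ)
        + (k : ℝ)⁻¹ * ∫ z in cube (d+1), ρ z * Real.log (ρ z) := by
  intro φ hφ1 hper
  have hd' : Continuous (fderiv ℝ φ) := hφ1.continuous_fderiv one_ne_zero
  have hpd : ∀ i : Fin (d+1), Continuous (pd i φ) := fun i => hd'.clm_apply continuous_const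
  have hphit : Continuous (phit φ) := hpd _
  have hgrad : Continuous (gradsp φ) := continuous_pi fun i => hpd _
  have hholo' := hholo φ hφ1 hper
  simp only [cube] at hsupp hmarg hent hholo' ⊢
  exact stmt_13' d k hk L hL hLsuper H hH μ hprob hsupp hmom ρ hρnn hmarg hLint hent
    φ hφ1 (gradsp φ) hgrad (phit φ) hphit hholo'
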